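/- Let V₁ and V₂ be commuting isometries on a complex Hilbert space H such that at least one of V₁, V₂ is pure (i.e., ‖(Vᵢ*)ⁿh‖ → 0 for all h ∈ H for some i), and let C := I − V₁V₁* − V₂V₂* + (V₁V₂)(V₁V₂)*. Then C = 0 if and only if C ≤ 0 (i.e., −C is a positive operator). -/

import Mathlib

open ContinuousLinearMap
open scoped InnerProductSpace

section Aux
variable {H : Type*} [NormedAddCommGroup H] [InnerProductSpace ℂ H] [CompleteSpace H]

lemma stmt9_aux (V₁ V₂ : H →L[ℂ] H)
    (hV₁ : adjoint V₁ ∘L V₁ = 1) (hV₂ : adjoint V₂ ∘L V₂ = 1)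
    (hcomm : V₁ ∘L V₂ = V₂ ∘L V₁)
    (hpure : ∀ h : H, Filter.Tendsto
        (fun n : ℕ => ‖((adjoint V₂) ^ n) h‖) Filter.atTop (nhds 0))
    (C : H →L[ℂ] H)
    (hC : C = 1 - V₁ ∘L adjoint V₁ - V₂ ∘L adjoint V₂
        + (V₁ ∘L V₂) ∘L adjoint (V₁ ∘L V₂))
    (hpos : (-C).IsPositive) : C = 0 := by
  simp only [← mul_def] at hV₁ hV₂ hcomm hC
  set W₁ := adjoint V₁ with hW₁
  set W₂ := adjoint V₂ with hW₂
  set D : H →L[ℂ] H := 1 - V₁ * W₁ with hD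
  have hadj : adjoint (V₁ * V₂) = W₂ * W₁ := by
    rw [mul_def, adjoint_comp, ← hW₁, ← hW₂, ← mul_def]
  have hcadj : W₂ * W₁ = W₁ * W₂ := by
    rw [hW₁, hW₂, mul_def, mul_def, ← adjoint_comp, ← adjoint_comp, ← mul_def, ← mul_def, hcomm]
  have hCD : C = D - V₂ * D * W₂ := by
    rw [hC, hadj, hcadj, hcomm, hD]
    noncomm_ring
  -- inner products with D
  have hDinner : ∀ y : H, ⟪D y, y⟫_ℂ = ⟪y, y⟫_ℂ - ⟪W₁ y, W₁ y⟫_ℂ := by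
    intro y
    have h1 : ⟪(V₁ * W₁) y, y⟫_ℂ = ⟪W₁ y, W₁ y⟫_ℂ := by
      rw [mul_apply_eq_comp, hW₁,
        show (V₁ : H →L[ℂ] H) = adjoint (adjoint V₁) from (adjoint_adjoint V₁).symm,
        adjoint_inner_left, adjoint_adjoint]
    rw [hD, sub_apply, one_apply_eq_self, inner_sub_left, h1]
  have hDre : ∀ y : H, RCLike.re ⟪D y, y⟫_ℂ = ‖y‖ ^ 2 - ‖W₁ y‖ ^ 2 := by
    intro y
    rw [hDinner, map_sub, inner_self_eq_norm_sq, inner_self_eq_norm_sq]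
  -- W₁ is a contraction
  have hW₁le : ∀ y : H, ‖W₁ y‖ ≤ ‖y‖ := by
    intro y
    have hiso : ‖V₁ (W₁ y)‖ = ‖W₁ y‖ := by
      have h1 : ⟪V₁ (W₁ y), V₁ (W₁ y)⟫_ℂ = ⟪W₁ y, W₁ y⟫_ℂ := by
        rw [show (V₁ : H →L[ℂ] H) = adjoint (adjoint V₁) from (adjoint_adjoint V₁).symm,
          adjoint_inner_left, adjoint_adjoint, ← mul_apply_eq_comp, hV₁, one_apply_eq_self]
      have h2 := congrArg RCLike.re h1
      rw [inner_self_eq_norm_sq, inner_self_eq_norm_sq] at h2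
      nlinarith [norm_nonneg (V₁ (W₁ y)), norm_nonneg (W₁ y)]
    have h1 : ⟪W₁ y, W₁ y⟫_ℂ = ⟪y, V₁ (W₁ y)⟫_ℂ := by
      nth_rewrite 1 [hW₁]
      rw [adjoint_inner_left]
    have h2 : ‖W₁ y‖ ^ 2 ≤ ‖y‖ * ‖W₁ y‖ := by
      have := re_inner_le_norm (𝕜 := ℂ) y (V₁ (W₁ y))
      rw [← h1] at this
      rw [← inner_self_eq_norm_sq (𝕜 := ℂ)]
      calc RCLike.re ⟪W₁ y, W₁ y⟫_ℂ ≤ ‖y‖ * ‖V₁ (W₁ y)‖ := this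
        _ = ‖y‖ * ‖W₁ y‖ := by rw [hiso]
    nlinarith [norm_nonneg (W₁ y), norm_nonneg y]
  -- D is zero
  have hD0 : D = 0 := by
    have key : ∀ h : H, RCLike.re ⟪D h, h⟫_ℂ = 0 := by
      intro h
      -- the sequence
      set f : ℕ → ℝ := fun n => RCLike.re ⟪D ((W₂ ^ n) h), (W₂ ^ n) h⟫_ℂ with hf
      have hstep : ∀ n, f n ≤ f (n + 1) := by
        intro n
        have hp := hpos.2 ((W₂ ^ n) h)
        rw [reApplyInnerSelf_apply, neg_apply, inner_neg_left, map_neg] at hp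
        have hCx : RCLike.re ⟪C ((W₂ ^ n) h), (W₂ ^ n) h⟫_ℂ
            = f n - f (n + 1) := by
          rw [hCD, sub_apply, inner_sub_left, map_sub, hf]
          have : ((V₂ * D * W₂) ((W₂ ^ n) h)) = V₂ (D ((W₂ ^ (n + 1)) h)) := by
            simp only [pow_succ', mul_apply_eq_comp]
          rw [this]
          have h2 : ⟪V₂ (D ((W₂ ^ (n + 1)) h)), (W₂ ^ n) h⟫_ℂ
              = ⟪D ((W₂ ^ (n + 1)) h), (W₂ ^ (n + 1)) h⟫_ℂ := by
            rw [show (V₂ : H →L[ℂ] H) = adjoint (adjoint V₂) from (adjoint_adjoint V₂).symm,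
              adjoint_inner_left, ← hW₂]
            congr 1
            rw [pow_succ', mul_apply_eq_comp]
          rw [h2]
        linarith
      have hmono : ∀ n, f 0 ≤ f n := by
        intro n
        induction n with
        | zero => exact le_refl _
        | succ k ih => exact ih.trans (hstep k)
      have hbound : ∀ n, f n ≤ ‖(W₂ ^ n) h‖ ^ 2 := by
        intro n
        rw [hf]
        have := hDre ((W₂ ^ n) h)
        nlinarith [sq_nonneg ‖W₁ ((W₂ ^ n) h)‖]
      have hlim : Filter.Tendsto (fun n : ℕ => ‖(W₂ ^ n) h‖ ^ 2) Filter.atTop (nhds 0) := by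
        have := (hpure h).mul (hpure h)
        simpa [sq] using this
      have h0le : f 0 ≤ 0 := by
        refine ge_of_tendsto' hlim fun n => (hmono n).trans (hbound n)
      have h0ge : 0 ≤ f 0 := by
        have := hDre h
        have h1 := hW₁le h
        rw [hf]
        simp only [pow_zero, one_apply_eq_self]
        nlinarith [norm_nonneg (W₁ h), norm_nonneg h]
      have : f 0 = 0 := le_antisymm h0le h0ge
      simpa [hf] using this
    -- convert to complex vanishing
    have key2 : ∀ h : H, ⟪D h, h⟫_ℂ = 0 := by
      intro h
      have h1 := key h
      rw [hDre] at h1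
      have h2 : ‖h‖ = ‖W₁ h‖ := by nlinarith [norm_nonneg (W₁ h), norm_nonneg h]
      rw [hDinner, inner_self_eq_norm_sq_to_K, inner_self_eq_norm_sq_to_K, h2, sub_self]
    have := (inner_map_self_eq_zero (D : H →ₗ[ℂ] H)).mp (fun x => key2 x)
    ext x
    have hx := congrFun (congrArg (fun T : H →ₗ[ℂ] H => T.toFun) this) x
    simpa using hx
  rw [hCD, hD0]
  simp
end Aux

theorem stmt9 {H : Type*} [NormedAddCommGroup H] [InnerProductSpace ℂ H] [CompleteSpace H]
    (V₁ V₂ : H →L[ℂ] H)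
    (hV₁ : adjoint V₁ ∘L V₁ = 1) (hV₂ : adjoint V₂ ∘L V₂ = 1)
    (hcomm : V₁ ∘L V₂ = V₂ ∘L V₁)
    (hpure : (∀ h : H, Filter.Tendsto
        (fun n : ℕ => ‖((adjoint V₁) ^ n) h‖) Filter.atTop (nhds 0)) ∨
      (∀ h : H, Filter.Tendsto
        (fun n : ℕ => ‖((adjoint V₂) ^ n) h‖) Filter.atTop (nhds 0)))
    (C : H →L[ℂ] H)
    (hC : C = 1 - V₁ ∘L adjoint V₁ - V₂ ∘L adjoint V₂
        + (V₁ ∘L V₂) ∘L adjoint (V₁ ∘L V₂)) :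
    C = 0 ↔ (-C).IsPositive := by
  constructor
  · rintro rfl
    rw [neg_zero]
    exact isPositive_zero
  · intro hpos
    rcases hpure with hp | hp
    · refine stmt9_aux V₂ V₁ hV₂ hV₁ hcomm.symm hp C ?_ hpos
      rw [hC, hcomm, sub_right_comm]
    · exact stmt9_aux V₁ V₂ hV₁ hV₂ hcomm hp C hC hpos
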